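/- arXiv:1203.0105 — 2 statements merged into one kernel-verified Lean document; each statement's English description precedes it below -/
import Mathlib

section
/- Let k ≥ 2, n ≥ 2k, and let X = {x_1,…,x_n} be a linearly independent subset of a vector space W over a division ring. Then the maximal inexact subsets of J_k(X) are exactly the special subsets of J_k(X). -/
open Submodule Set Function Module

/-- A family of vectors is `m`-independent if every `m`-element subfamily is
linearly independent. -/
def MIndep (R : Type*) {W : Type*} [DivisionRing R] [AddCommGroup W] [Module R W]
    {n : ℕ} (m : ℕ) (x : Fin n → W) : Prop :=
  ∀ A : Finset (Fin n), A.card = m → LinearIndependent R (fun i : A => x (i : Fin n))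

/-- `J_k(X)`: the set of all `k`-dimensional subspaces spanned by `k`-element subsets of
the family `x`. -/
def JkSet (R : Type*) {W : Type*} [DivisionRing R] [AddCommGroup W] [Module R W]
    {n : ℕ} (k : ℕ) (x : Fin n → W) : Set (Submodule R W) :=
  {P | ∃ A : Finset (Fin n), A.card = k ∧ P = Submodule.span R (x '' ↑A)}

/-- The special subset `J(+i,+j) ∪ J(-i)` of `J = J_k(X)`: all members of `J` which either
contain both `x i` and `x j`, or do not contain `x i`. -/
def SpecialSubset (R : Type*) {W : Type*} [DivisionRing R] [AddCommGroup W] [Module R W]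
    {n : ℕ} (k : ℕ) (x : Fin n → W) (i j : Fin n) : Set (Submodule R W) :=
  {P | P ∈ JkSet R k x ∧ ((x i ∈ P ∧ x j ∈ P) ∨ x i ∉ P)}

/-- A subset `Z` of `J = J_k(X)` is inexact if there is a `(2k)`-independent `n`-element
family `y` with `J_k(Y) ≠ J` and `Z ⊆ J_k(Y)`. -/
def InexactIn (R : Type*) {W : Type*} [DivisionRing R] [AddCommGroup W] [Module R W]
    (n k : ℕ) (J : Set (Submodule R W)) (Z : Set (Submodule R W)) : Prop :=
  ∃ y : Fin n → W, Function.Injective y ∧ MIndep R (2 * k) y ∧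
    JkSet R k y ≠ J ∧ Z ⊆ JkSet R k y


section Aux

variable {K W : Type*} [DivisionRing K] [AddCommGroup W] [Module K W] {n k : ℕ}

theorem span_image_inf {ι : Type*} {v : ι → W} (hv : LinearIndependent K v) (s t : Set ι) :
    span K (v '' s) ⊓ span K (v '' t) = span K (v '' (s ∩ t)) := by
  refine le_antisymm ?_ (le_inf (span_mono (Set.image_mono inter_subset_left))
    (span_mono (Set.image_mono inter_subset_right)))
  intro w hw
  obtain ⟨hws, hwt⟩ := hw
  have hsplit : span K (v '' s) = span K (v '' (s ∩ t)) ⊔ span K (v '' (s \ t)) := by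
    rw [← span_union, ← Set.image_union, Set.inter_union_diff]
  rw [hsplit] at hws
  obtain ⟨a, ha, b, hb, rfl⟩ := mem_sup.mp hws
  have hbt : b ∈ span K (v '' t) := by
    have h1 : a ∈ span K (v '' t) := span_mono (Set.image_mono inter_subset_right) ha
    have := sub_mem hwt h1
    simpa using this
  have hb0 : b = 0 :=
    (disjoint_def.mp (hv.disjoint_span_image Set.disjoint_sdiff_left)) b hb hbt
  simpa [hb0] using ha

theorem mem_span_image_iff {x : Fin n → W} (hx : LinearIndependent K x) {i : Fin n}
    {s : Set (Fin n)} : x i ∈ span K (x '' s) ↔ i ∈ s := by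
  constructor
  · intro h
    by_contra hi
    exact hx.notMem_span_image hi h
  · intro h
    exact subset_span (Set.mem_image_of_mem x h)

theorem MIndep.restrict {y : Fin n → W} {m : ℕ} (hy : MIndep K m y) (hmn : m ≤ n)
    (S : Finset (Fin n)) (hS : S.card ≤ m) :
    LinearIndependent K (fun i : (↑S : Set (Fin n)) => y i) := by
  obtain ⟨T, hST, _, hT⟩ := Finset.exists_subsuperset_card_eq (Finset.subset_univ S) hS
    (by simpa using hmn)
  have h := hy T hT
  have heq : (fun i : (↑S : Set (Fin n)) => y i) =
      (fun i : T => y (i : Fin n)) ∘ (fun a => ⟨a.1, hST (by exact a.2)⟩) := rfl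
  rw [heq]
  exact h.comp _ (fun a b hab => by
    apply Subtype.ext
    injection hab)

theorem span_inf_of_mIndep {y : Fin n → W} (hy : MIndep K (2 * k) y) (h2k : 2 * k ≤ n)
    (s t : Finset (Fin n)) (hs : s.card ≤ k) (ht : t.card ≤ k) :
    span K (y '' ↑s) ⊓ span K (y '' ↑t) = span K (y '' ↑(s ∩ t)) := by
  classical
  set U := s ∪ t with hU
  have hUcard : U.card ≤ 2 * k := by
    calc U.card ≤ s.card + t.card := Finset.card_union_le s t
    _ ≤ 2 * k := by omega
  have hind := hy.restrict h2k U hUcard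
  have key := span_image_inf hind (Subtype.val ⁻¹' (↑s : Set (Fin n)))
    (Subtype.val ⁻¹' (↑t : Set (Fin n)))
  have himg : ∀ r : Finset (Fin n), r ⊆ U →
      (fun i : (↑U : Set (Fin n)) => y i) '' (Subtype.val ⁻¹' (↑r : Set (Fin n))) = y '' ↑r := by
    intro r hr
    have heq : (fun i : (↑U : Set (Fin n)) => y i) = y ∘ Subtype.val := rfl
    rw [heq, Set.image_comp, Subtype.image_preimage_coe,
      Set.inter_eq_self_of_subset_right (by exact_mod_cast hr)]
  rw [himg s Finset.subset_union_left, himg t Finset.subset_union_right] at key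
  rw [key, ← Set.preimage_inter, ← Finset.coe_inter,
    himg (s ∩ t) (Finset.inter_subset_union)]

theorem inf'_span_image {v : Fin n → W} {kk : ℕ}
    (hcap : ∀ s t : Finset (Fin n), s.card ≤ kk → t.card ≤ kk →
      span K (v '' ↑s) ⊓ span K (v '' ↑t) = span K (v '' ↑(s ∩ t)))
    (𝒮 : Finset (Finset (Fin n))) (h : 𝒮.Nonempty) (hcards : ∀ B ∈ 𝒮, B.card ≤ kk) :
    𝒮.inf' h (fun B => span K (v '' ↑B)) = span K (v '' ↑(𝒮.inf' h id)) := by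
  classical
  revert hcards
  induction h using Finset.Nonempty.cons_induction with
  | singleton a => intro _; simp
  | cons a s ha hs ih =>
    intro hcards
    have hcards' : ∀ B ∈ s, B.card ≤ kk := fun B hB => hcards B (Finset.mem_cons_of_mem hB)
    have hIcard : (s.inf' hs id).card ≤ kk := by
      obtain ⟨b, hb⟩ := hs
      calc (s.inf' ⟨b, hb⟩ id).card ≤ b.card := Finset.card_le_card (Finset.inf'_le id hb)
        _ ≤ kk := hcards' b hb
    rw [Finset.inf'_cons (H := hs), Finset.inf'_cons (H := hs), ih hcards',
      hcap a (s.inf' hs id) (hcards a (Finset.mem_cons_self a s)) hIcard]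
    rfl

/-- Main lemma (a): a separating subfamily forces `J_k(y) = J_k(x)`. -/
theorem jk_eq_of_separating (hk : 2 ≤ k) (hn : 2 * k ≤ n)
    {x : Fin n → W} (hx : LinearIndependent K x)
    (Z : Set (Submodule K W)) (hZJ : Z ⊆ JkSet K k x)
    (hsep : ∀ i j : Fin n, i ≠ j → ∃ P ∈ Z, x i ∈ P ∧ x j ∉ P)
    {y : Fin n → W} (hy : MIndep K (2 * k) y)
    (hZy : Z ⊆ JkSet K k y) : JkSet K k y = JkSet K k x := by
  classical
  -- choice of B-sets, non-dependently
  have hfex : ∀ A : Finset (Fin n), ∃ B : Finset (Fin n),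
      span K (x '' ↑A) ∈ JkSet K k y →
      (B.card = k ∧ span K (x '' ↑A) = span K (y '' ↑B)) := by
    intro A
    by_cases h : span K (x '' ↑A) ∈ JkSet K k y
    · obtain ⟨B, hB1, hB2⟩ := h
      exact ⟨B, fun _ => ⟨hB1, hB2⟩⟩
    · exact ⟨∅, fun h' => absurd h' h⟩
  choose f hf using hfex
  -- Step B
  have hstep : ∀ i : Fin n, ∃ b : Fin n, ∃ c : K, c ≠ 0 ∧ x i = c • y b := by
    intro i
    set 𝒮 : Finset (Finset (Fin n)) :=
      Finset.univ.filter (fun A => A.card = k ∧ i ∈ A ∧ span K (x '' ↑A) ∈ Z) with h𝒮def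
    have hmem𝒮 : ∀ A, A ∈ 𝒮 ↔ (A.card = k ∧ i ∈ A ∧ span K (x '' ↑A) ∈ Z) := by
      intro A; simp [h𝒮def]
    have hget : ∀ j : Fin n, j ≠ i → ∃ A ∈ 𝒮, j ∉ A := by
      intro j hj
      obtain ⟨P, hPZ, hPi, hPj⟩ := hsep i j (Ne.symm hj)
      obtain ⟨A, hA1, hA2⟩ := hZJ hPZ
      refine ⟨A, (hmem𝒮 A).mpr ⟨hA1, ?_, by rwa [← hA2]⟩, ?_⟩
      · have h3 := hPi; rw [hA2] at h3
        exact (mem_span_image_iff hx).mp h3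
      · intro hjA
        exact hPj (by rw [hA2]; exact subset_span (Set.mem_image_of_mem x hjA))
    haveI : Nontrivial (Fin n) :=
      ⟨⟨⟨0, by omega⟩, ⟨1, by omega⟩, by simp [Fin.ext_iff]⟩⟩
    obtain ⟨j0, hj0i⟩ := exists_ne i
    obtain ⟨A0, hA0, -⟩ := hget j0 hj0i
    have h𝒮ne : 𝒮.Nonempty := ⟨A0, hA0⟩
    have hI : 𝒮.inf' h𝒮ne id = {i} := by
      apply Finset.Subset.antisymm
      · intro a ha
        by_contra hai
        have hai' : a ≠ i := by simpa using hai
        obtain ⟨A, hA, haA⟩ := hget a hai'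
        exact haA (Finset.inf'_le id hA ha)
      · intro a ha
        rw [Finset.mem_singleton] at ha
        subst ha
        exact Finset.le_inf' h𝒮ne id (fun A hA => by
          simpa using ((hmem𝒮 A).mp hA).2.1) (Finset.mem_singleton_self a)
    have hcapx : ∀ s t : Finset (Fin n), s.card ≤ n → t.card ≤ n →
        span K (x '' ↑s) ⊓ span K (x '' ↑t) = span K (x '' ↑(s ∩ t)) := by
      intro s t _ _
      rw [Finset.coe_inter]
      exact span_image_inf hx _ _
    have hxinf : 𝒮.inf' h𝒮ne (fun A => span K (x '' ↑A)) = span K {x i} := by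
      rw [inf'_span_image hcapx 𝒮 h𝒮ne (fun B _ => by
        simpa using Finset.card_le_univ B), hI]
      simp
    have hZmem : ∀ A ∈ 𝒮, span K (x '' ↑A) ∈ JkSet K k y :=
      fun A hA => hZy ((hmem𝒮 A).mp hA).2.2
    -- switch to the y-side
    set 𝒯 : Finset (Finset (Fin n)) := 𝒮.image f with h𝒯def
    have h𝒯ne : 𝒯.Nonempty := ⟨f A0, Finset.mem_image_of_mem f hA0⟩
    have hswitch : 𝒮.inf' h𝒮ne (fun A => span K (x '' ↑A))
        = 𝒯.inf' h𝒯ne (fun B => span K (y '' ↑B)) := by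
      rw [Finset.inf'_eq_inf h𝒮ne, Finset.inf'_eq_inf h𝒯ne, h𝒯def, Finset.inf_image]
      apply Finset.inf_congr rfl
      intro A hA
      exact (hf A (hZmem A hA)).2
    have hcards𝒯 : ∀ B ∈ 𝒯, B.card ≤ k := by
      intro B hB
      rw [h𝒯def, Finset.mem_image] at hB
      obtain ⟨A, hA, rfl⟩ := hB
      exact le_of_eq (hf A (hZmem A hA)).1
    have hyinf : 𝒯.inf' h𝒯ne (fun B => span K (y '' ↑B))
        = span K (y '' ↑(𝒯.inf' h𝒯ne id)) :=
      inf'_span_image (span_inf_of_mIndep hy (le_trans (by omega) hn)) 𝒯 h𝒯ne hcards𝒯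
    set F := 𝒯.inf' h𝒯ne id with hFdef
    have hkey : span K {x i} = span K (y '' ↑F) := by
      rw [← hxinf, hswitch, hyinf]
    have hxine : x i ≠ 0 := hx.ne_zero i
    have hxiF : x i ∈ span K (y '' ↑F) := by
      rw [← hkey]; exact mem_span_singleton_self (x i)
    -- F is nonempty
    obtain ⟨b, hbF⟩ : F.Nonempty := by
      rcases Finset.eq_empty_or_nonempty F with h | h
      · exfalso
        rw [h] at hxiF
        simp only [Finset.coe_empty, Set.image_empty, span_empty, mem_bot] at hxiF
        exact hxine hxiF
      · exact h
    -- F = {b}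
    have hFcard : F ⊆ {b} := by
      intro b' hb'
      rw [Finset.mem_singleton]
      by_contra hbb'
      -- y b and y b' both lie in span {x i}
      have hyb : y b ∈ span K {x i} := by
        rw [hkey]; exact subset_span (Set.mem_image_of_mem y (by exact_mod_cast hbF))
      have hyb' : y b' ∈ span K {x i} := by
        rw [hkey]; exact subset_span (Set.mem_image_of_mem y (by exact_mod_cast hb'))
      have hFk : F.card ≤ k := by
        obtain ⟨B, hB⟩ := h𝒯ne
        calc F.card ≤ B.card := Finset.card_le_card (Finset.inf'_le id hB)
          _ ≤ k := hcards𝒯 B hB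
      have hpair := hy.restrict (le_trans (by omega) hn) {b, b'}
        (le_trans (Finset.card_insert_le _ _) (by simp; omega))
      obtain ⟨c, hc⟩ := mem_span_singleton.mp hyb
      obtain ⟨c', hc'⟩ := mem_span_singleton.mp hyb'
      have hbne : y b ≠ 0 := by
        have := hpair.ne_zero ⟨b, by simp⟩
        simpa using this
      have hcne : c ≠ 0 := by
        rintro rfl; rw [zero_smul] at hc; exact hbne hc.symm
      -- y b' ∈ span {y b}
      have hmem : y b' ∈ span K {y b} := by
        rw [← hc, ← hc']
        exact mem_span_singleton.mpr ⟨c' * c⁻¹, by rw [smul_smul, mul_assoc, inv_mul_cancel₀ hcne, mul_one]⟩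
      -- contradiction with pair independence
      have hb'mem : (b' : Fin n) ∈ (↑({b, b'} : Finset (Fin n)) : Set (Fin n)) := by simp
      have hbmem : (b : Fin n) ∈ (↑({b, b'} : Finset (Fin n)) : Set (Fin n)) := by simp
      have hnotmem := hpair.notMem_span_image
        (s := {(⟨b, hbmem⟩ : (↑({b, b'} : Finset (Fin n)) : Set (Fin n)))})
        (x := ⟨b', hb'mem⟩) (by
          intro hmem'
          apply hbb'
          exact Subtype.ext_iff.mp (Set.mem_singleton_iff.mp hmem'))
      apply hnotmem
      simpa using hmem
    have hFeq : F = {b} :=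
      Finset.Subset.antisymm hFcard (Finset.singleton_subset_iff.mpr hbF)
    rw [hFeq] at hkey
    simp only [Finset.coe_singleton, Set.image_singleton] at hkey
    have hxib : x i ∈ span K {y b} := by rw [← hkey]; exact mem_span_singleton_self _
    obtain ⟨c, hc⟩ := mem_span_singleton.mp hxib
    refine ⟨b, c, ?_, hc.symm⟩
    rintro rfl
    rw [zero_smul] at hc
    exact hxine hc.symm
  choose σ c hc0 hxc using hstep
  -- σ is injective
  have hσinj : Function.Injective σ := by
    intro i i' hii'
    by_contra hne
    have h1 : x i' ∈ span K (x '' ({i} : Set (Fin n))) := by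
      rw [Set.image_singleton]
      rw [hxc i', ← hii']
      have : y (σ i) = (c i)⁻¹ • x i := by
        rw [hxc i, smul_smul, inv_mul_cancel₀ (hc0 i), one_smul]
      rw [this, smul_smul]
      exact mem_span_singleton.mpr ⟨c i' * (c i)⁻¹, rfl⟩
    exact hx.notMem_span_image (by simpa using Ne.symm hne) h1
  have hσbij : Function.Bijective σ := Finite.injective_iff_bijective.mp hσinj
  let e : Fin n ≃ Fin n := Equiv.ofBijective σ hσbij
  -- span equality under σ
  have hspan : ∀ A : Finset (Fin n), span K (x '' ↑A) = span K (y '' ↑(A.image σ)) := by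
    intro A
    apply le_antisymm
    · rw [span_le]
      rintro - ⟨a, ha, rfl⟩
      rw [hxc a]
      exact smul_mem _ _ (subset_span (Set.mem_image_of_mem y (by
        exact_mod_cast Finset.mem_image_of_mem σ (by exact_mod_cast ha))))
    · rw [span_le]
      rintro - ⟨b, hb, rfl⟩
      have hb' : b ∈ A.image σ := by exact_mod_cast hb
      obtain ⟨a, ha, rfl⟩ := Finset.mem_image.mp hb'
      have : y (σ a) = (c a)⁻¹ • x a := by
        rw [hxc a, smul_smul, inv_mul_cancel₀ (hc0 a), one_smul]
      rw [this]
      exact smul_mem _ _ (subset_span (Set.mem_image_of_mem x (by exact_mod_cast ha)))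
  -- conclude
  apply Set.Subset.antisymm
  · rintro P ⟨B, hB1, rfl⟩
    refine ⟨B.image e.symm, ?_, ?_⟩
    · rw [Finset.card_image_of_injective _ e.symm.injective]; exact hB1
    · have himg : (B.image e.symm).image σ = B := by
        rw [Finset.image_image]
        have : σ ∘ (e.symm : Fin n → Fin n) = id := by
          funext b
          exact e.apply_symm_apply b
        rw [this, Finset.image_id]
      rw [hspan (B.image e.symm), himg]
  · rintro P ⟨A, hA1, rfl⟩
    exact ⟨A.image σ, by rw [Finset.card_image_of_injective _ hσinj]; exact hA1, hspan A⟩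

theorem linearIndependent_update_add {x : Fin n → W} (hx : LinearIndependent K x)
    {i j : Fin n} (hij : j ≠ i) :
    LinearIndependent K (Function.update x i (x i + x j)) := by
  classical
  rw [linearIndependent_iff] at hx ⊢
  intro f hf
  set y := Function.update x i (x i + x j) with hy
  have key : Finsupp.linearCombination K y f
      = Finsupp.linearCombination K x (f + f i • Finsupp.single j 1) := by
    rw [map_add, map_smul, Finsupp.linearCombination_single, one_smul]
    rw [Finsupp.linearCombination_apply, Finsupp.linearCombination_apply]
    unfold Finsupp.sum
    have hterm : ∀ a ∈ f.support, f a • y a = f a • x a + (if a = i then f a • x j else 0) := by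
      intro a _
      by_cases h : a = i
      · subst h; simp [hy, smul_add]
      · simp [hy, Function.update_of_ne h, h]
    rw [Finset.sum_congr rfl hterm, Finset.sum_add_distrib, Finset.sum_ite_eq' f.support i]
    by_cases hi : i ∈ f.support
    · simp [hi]
    · have : f i = 0 := Finsupp.notMem_support_iff.mp hi
      simp [hi, this]
  rw [key] at hf
  have hg := hx _ hf
  have hfi : f i = 0 := by
    have := congrArg (fun g => g i) hg
    simpa [Finsupp.single_apply, hij] using this
  have hfinal : f + f i • Finsupp.single j 1 = f := by rw [hfi]; simp
  rw [hfinal] at hg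
  exact hg

theorem exists_finset_card_subset_avoid (hk2 : 2 ≤ k) (hn : 2 * k ≤ n)
    (R F : Finset (Fin n)) (hR : R.card ≤ k) (hF : F.card ≤ 2) (hdisj : Disjoint R F) :
    ∃ A : Finset (Fin n), A.card = k ∧ R ⊆ A ∧ Disjoint A F := by
  classical
  have hsub : R ⊆ Finset.univ \ F := by
    intro a ha
    simp only [Finset.mem_sdiff, Finset.mem_univ, true_and]
    exact fun hf => (Finset.disjoint_left.mp hdisj) ha hf
  have hcard : k ≤ (Finset.univ \ F).card := by
    rw [Finset.card_sdiff_of_subset (Finset.subset_univ F)]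
    simp only [Finset.card_univ, Fintype.card_fin]
    omega
  obtain ⟨A, hRA, hAsub, hA⟩ := Finset.exists_subsuperset_card_eq hsub hR hcard
  refine ⟨A, hA, hRA, Finset.disjoint_left.mpr ?_⟩
  intro a haA haF
  have := hAsub haA
  simp only [Finset.mem_sdiff] at this
  exact this.2 haF

/-- Lemma (b): special subsets are inexact. -/
theorem special_subset_inexact (hk : 2 ≤ k) (hn : 2 * k ≤ n)
    {x : Fin n → W} (hx : LinearIndependent K x) {i j : Fin n} (hij : i ≠ j) :
    InexactIn K n k (JkSet K k x) (SpecialSubset K k x i j) := by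
  classical
  set y := Function.update x i (x i + x j) with hydef
  have hY : LinearIndependent K y := linearIndependent_update_add hx (Ne.symm hij)
  have hyi : y i = x i + x j := by rw [hydef]; simp
  have hyoff : ∀ a : Fin n, a ≠ i → y a = x a := by
    intro a ha; rw [hydef]; simp [Function.update_of_ne ha]
  refine ⟨y, hY.injective, ?_, ?_, ?_⟩
  · intro A _
    exact hY.comp _ Subtype.val_injective
  · -- JkSet y ≠ JkSet x
    intro hEq
    obtain ⟨B, hBcard, hBi, hBj⟩ := exists_finset_card_subset_avoid hk hn {i} {j}
      (by simpa using by omega) (by simp) (by simpa using hij)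
    have hiB : i ∈ B := hBi (Finset.mem_singleton_self i)
    have hjB : j ∉ B := fun h => (Finset.disjoint_left.mp hBj) h (Finset.mem_singleton_self j)
    have hQ : span K (y '' ↑B) ∈ JkSet K k x := by
      rw [← hEq]; exact ⟨B, hBcard, rfl⟩
    obtain ⟨C, hCcard, hC⟩ := hQ
    set Q := span K (y '' ↑B) with hQdef
    have hysub : ∀ a ∈ B, y a ∈ Q := by
      intro a ha
      exact subset_span (Set.mem_image_of_mem y (by exact_mod_cast ha))
    have hxij : x i + x j ∈ Q := by rw [← hyi]; exact hysub i hiB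
    have hxij' : x i + x j ∈ span K (x '' ↑C) := by rw [← hC]; exact hxij
    have hiC : i ∈ C := by
      by_contra hiC
      have h1 : x i ∈ span K (x '' ↑(insert j C)) := by
        have h2 : x i + x j ∈ span K (x '' ↑(insert j C)) :=
          span_mono (Set.image_mono (by exact_mod_cast Finset.subset_insert j C)) hxij'
        have h3 : x j ∈ span K (x '' ↑(insert j C)) :=
          subset_span (Set.mem_image_of_mem x (by exact_mod_cast Finset.mem_insert_self j C))
        simpa using sub_mem h2 h3
      have := (mem_span_image_iff hx).mp h1
      simp only [Finset.coe_insert, Set.mem_insert_iff, Finset.mem_coe] at this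
      rcases this with h | h
      · exact hij h
      · exact hiC h
    have hjC : j ∈ C := by
      by_contra hjC
      have h1 : x j ∈ span K (x '' ↑(insert i C)) := by
        have h2 : x i + x j ∈ span K (x '' ↑(insert i C)) :=
          span_mono (Set.image_mono (by exact_mod_cast Finset.subset_insert i C)) hxij'
        have h3 : x i ∈ span K (x '' ↑(insert i C)) :=
          subset_span (Set.mem_image_of_mem x (by exact_mod_cast Finset.mem_insert_self i C))
        simpa using sub_mem h2 h3
      have := (mem_span_image_iff hx).mp h1
      simp only [Finset.coe_insert, Set.mem_insert_iff, Finset.mem_coe] at this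
      rcases this with h | h
      · exact hij h.symm
      · exact hjC h
    have hBC : ∀ a ∈ B, a ≠ i → a ∈ C := by
      intro a ha hai
      have : x a ∈ Q := by rw [← hyoff a hai]; exact hysub a ha
      rw [hC] at this
      exact (mem_span_image_iff hx).mp this
    have hDsub : insert j B ⊆ insert i C := by
      intro a ha
      rcases Finset.mem_insert.mp ha with rfl | haB
      · exact Finset.mem_insert_of_mem hjC
      · by_cases hai : a = i
        · subst hai; exact Finset.mem_insert_self a C
        · exact Finset.mem_insert_of_mem (hBC a haB hai)
    have hcard1 : (insert j B).card = k + 1 := by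
      rw [Finset.card_insert_of_notMem hjB, hBcard]
    have hcard2 : (insert i C).card = k := by
      rw [Finset.insert_eq_self.mpr hiC, hCcard]
    have := Finset.card_le_card hDsub
    omega
  · -- SpecialSubset ⊆ JkSet y
    rintro P ⟨⟨A, hAcard, rfl⟩, hP⟩
    rcases hP with ⟨hPi, hPj⟩ | hPi
    · have hiA : i ∈ A := by
        have := (mem_span_image_iff hx).mp hPi; exact_mod_cast this
      have hjA : j ∈ A := by
        have := (mem_span_image_iff hx).mp hPj; exact_mod_cast this
      refine ⟨A, hAcard, le_antisymm ?_ ?_⟩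
      · rw [span_le]
        rintro - ⟨a, ha, rfl⟩
        by_cases hai : a = i
        · subst hai
          have h1 : y a ∈ span K (y '' ↑A) :=
            subset_span (Set.mem_image_of_mem y (by exact_mod_cast hiA))
          have h2 : y j ∈ span K (y '' ↑A) :=
            subset_span (Set.mem_image_of_mem y (by exact_mod_cast hjA))
          have h3 : x a = y a - y j := by
            rw [hyi, hyoff j (Ne.symm hij)]; abel
          rw [h3]; exact sub_mem h1 h2
        · rw [← hyoff a hai]
          exact subset_span (Set.mem_image_of_mem y (by exact_mod_cast ha))
      · rw [span_le]
        rintro - ⟨a, ha, rfl⟩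
        by_cases hai : a = i
        · subst hai
          rw [hyi]
          exact add_mem (subset_span (Set.mem_image_of_mem x (by exact_mod_cast hiA)))
            (subset_span (Set.mem_image_of_mem x (by exact_mod_cast hjA)))
        · rw [hyoff a hai]
          exact subset_span (Set.mem_image_of_mem x (by exact_mod_cast ha))
    · have hiA : i ∉ A := by
        intro h
        exact hPi (subset_span (Set.mem_image_of_mem x (by exact_mod_cast h)))
      refine ⟨A, hAcard, ?_⟩
      have himg : x '' ↑A = y '' ↑A := by
        apply Set.ext
        intro w
        constructor
        · rintro ⟨a, ha, rfl⟩
          exact ⟨a, ha, hyoff a (fun h => hiA (by rwa [h] at ha))⟩ 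
        · rintro ⟨a, ha, rfl⟩
          exact ⟨a, ha, (hyoff a (fun h => hiA (by rwa [h] at ha))).symm⟩
      rw [himg]

/-- Lemma (c): inclusion of special subsets forces equality of the index pairs. -/
theorem special_subset_le (hk : 2 ≤ k) (hn : 2 * k ≤ n)
    {x : Fin n → W} (hx : LinearIndependent K x) {i j i' j' : Fin n}
    (hij : i ≠ j) (hij' : i' ≠ j')
    (hsub : SpecialSubset K k x i j ⊆ SpecialSubset K k x i' j') :
    i = i' ∧ j = j' := by
  classical
  have hmemP : ∀ (A : Finset (Fin n)) (a : Fin n),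
      x a ∈ span K (x '' ↑A) ↔ a ∈ A := by
    intro A a
    rw [mem_span_image_iff hx, Finset.mem_coe]
  have hii' : i = i' := by
    by_contra hne
    obtain ⟨A, hAcard, hAR, hAF⟩ := exists_finset_card_subset_avoid hk hn {i'} {i, j'}
      (by simp; omega) (Finset.card_insert_le _ _) (by
        simp only [Finset.disjoint_left, Finset.mem_singleton, Finset.mem_insert]
        rintro a rfl
        push_neg
        exact ⟨fun h => hne h.symm, hij'⟩)
    have hi'A : i' ∈ A := hAR (Finset.mem_singleton_self i')
    have hiA : i ∉ A := fun h => (Finset.disjoint_left.mp hAF) h (by simp)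
    have hj'A : j' ∉ A := fun h => (Finset.disjoint_left.mp hAF) h (by simp)
    have hPmem : span K (x '' ↑A) ∈ SpecialSubset K k x i j :=
      ⟨⟨A, hAcard, rfl⟩, Or.inr (fun h => hiA ((hmemP A i).mp h))⟩
    rcases (hsub hPmem).2 with ⟨-, h2⟩ | h1
    · exact hj'A ((hmemP A j').mp h2)
    · exact h1 ((hmemP A i').mpr hi'A)
  subst hii'
  refine ⟨rfl, ?_⟩
  by_contra hne
  obtain ⟨A, hAcard, hAR, hAF⟩ := exists_finset_card_subset_avoid hk hn {i, j} {j'}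
    (le_trans (Finset.card_insert_le _ _) (by simp; omega)) (by simp) (by
      simp only [Finset.disjoint_left, Finset.mem_singleton, Finset.mem_insert]
      rintro a (rfl | rfl)
      · exact hij'
      · exact hne)
  have hiA : i ∈ A := hAR (by simp)
  have hjA : j ∈ A := hAR (by simp)
  have hj'A : j' ∉ A := fun h => (Finset.disjoint_left.mp hAF) h (by simp)
  have hPmem : span K (x '' ↑A) ∈ SpecialSubset K k x i j :=
    ⟨⟨A, hAcard, rfl⟩, Or.inl ⟨(hmemP A i).mpr hiA, (hmemP A j).mpr hjA⟩⟩
  rcases (hsub hPmem).2 with ⟨-, h2⟩ | h1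
  · exact hj'A ((hmemP A j').mp h2)
  · exact h1 ((hmemP A i).mpr hiA)

/-- Every inexact subset is contained in a special subset. -/
theorem inexact_subset_special (hk : 2 ≤ k) (hn : 2 * k ≤ n)
    {x : Fin n → W} (hx : LinearIndependent K x)
    (Z : Set (Submodule K W)) (hZJ : Z ⊆ JkSet K k x)
    (hinex : InexactIn K n k (JkSet K k x) Z) :
    ∃ i j : Fin n, i ≠ j ∧ Z ⊆ SpecialSubset K k x i j := by
  obtain ⟨y, hyinj, hy2k, hyne, hZy⟩ := hinex
  by_contra h
  push_neg at h
  have hsep : ∀ i j : Fin n, i ≠ j → ∃ P ∈ Z, x i ∈ P ∧ x j ∉ P := by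
    intro i j hij
    obtain ⟨P, hPZ, hPS⟩ := Set.not_subset.mp (h i j hij)
    have hPJ : P ∈ JkSet K k x := hZJ hPZ
    refine ⟨P, hPZ, ?_, ?_⟩
    · by_contra hPi
      exact hPS ⟨hPJ, Or.inr hPi⟩
    · intro hPj
      by_cases hPi : x i ∈ P
      · exact hPS ⟨hPJ, Or.inl ⟨hPi, hPj⟩⟩
      · exact hPS ⟨hPJ, Or.inr hPi⟩
  exact hyne (jk_eq_of_separating hk hn hx Z hZJ hsep hy2k hZy)

end Aux

/-- For a linearly independent family `x` of `n` vectors, the maximal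
inexact subsets of `J_k(X)` are exactly the special subsets of `J_k(X)`. -/
theorem maximal_inexact_iff_special
    {K W : Type*} [DivisionRing K] [AddCommGroup W] [Module K W]
    (n k : ℕ) (hk : 2 ≤ k) (hn : 2 * k ≤ n)
    (x : Fin n → W) (hx : LinearIndependent K x) :
    ∀ Z ⊆ JkSet K k x,
      ((InexactIn K n k (JkSet K k x) Z ∧
          ∀ Z' ⊆ JkSet K k x, InexactIn K n k (JkSet K k x) Z' → Z ⊆ Z' → Z' = Z) ↔
        ∃ i j : Fin n, i ≠ j ∧ Z = SpecialSubset K k x i j) := by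
  intro Z hZJ
  constructor
  · rintro ⟨hinex, hmax⟩
    obtain ⟨i, j, hij, hsub⟩ := inexact_subset_special hk hn hx Z hZJ hinex
    have hSJ : SpecialSubset K k x i j ⊆ JkSet K k x := fun P hP => hP.1
    have hSin := special_subset_inexact hk hn hx hij
    exact ⟨i, j, hij, (hmax _ hSJ hSin hsub).symm⟩
  · rintro ⟨i, j, hij, rfl⟩
    refine ⟨special_subset_inexact hk hn hx hij, ?_⟩
    intro Z' hZ'J hZ'inex hsub
    obtain ⟨i', j', hij', hsub'⟩ := inexact_subset_special hk hn hx Z' hZ'J hZ'inex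
    obtain ⟨rfl, rfl⟩ := special_subset_le hk hn hx hij hij' (hsub.trans hsub')
    exact Set.Subset.antisymm hsub' hsub
end

section
/- Let W be a 4-dimensional left vector space over a division ring, X = {x_1,…,x_5} a 4-independent subset of W, and Y = {y*_1,…,y*_5} a 4-independent subset of the dual space W*; let U_i denote the annihilator of y*_i in W (a 3-dimensional subspace). Assume that every U_i is spanned by a subset of X and that every line ⟨x_i⟩ is the intersection of some of the subspaces U_j. Let Z = J_2(X) ∩ J*_2(Y). Then |Z| ≤ 5 < 7 = a(5,2). -/
open Submodule Set Function Module

/-- `J*_k(Y)`: the set of annihilators in `W` of the elements of `J_k(Y)` for a family `y`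
of linear functionals; equivalently, the intersections of `k` distinct kernels `U_j`. -/
def JStarSet (K : Type*) {W : Type*} [DivisionRing K] [AddCommGroup W] [Module K W]
    {n : ℕ} (k : ℕ) (y : Fin n → (W →ₗ[K] K)) : Set (Submodule K W) :=
  {P | ∃ A : Finset (Fin n), A.card = k ∧ P = ⨅ i ∈ A, LinearMap.ker (y i)}

/-- Any subfamily of size at most `4` of a `4`-independent family of `5` vectors is
linearly independent. -/
lemma mindep_sub {R : Type*} {W : Type*} [DivisionRing R] [AddCommGroup W] [Module R W]
    {x : Fin 5 → W} (hx : MIndep R 4 x) (A : Finset (Fin 5)) (hA : A.card ≤ 4) :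
    LinearIndependent R (fun i : A => x (i : Fin 5)) := by
  obtain ⟨B, hAB, hB4⟩ := Finset.exists_superset_card_eq hA (by simp)
  have h := hx B hB4
  have hf : Function.Injective (fun i : A => (⟨(i : Fin 5), hAB i.2⟩ : B)) := by
    intro a b hab
    have h : (a : Fin 5) = (b : Fin 5) := congrArg (fun z : B => (z : Fin 5)) hab
    exact Subtype.ext h
  exact h.comp _ hf

/-- A vector `x c` with `c` outside a small index set `A` is not in the span of
`x '' A`. -/
lemma mindep_not_mem_span {R : Type*} {W : Type*} [DivisionRing R] [AddCommGroup W]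
    [Module R W] {x : Fin 5 → W} (hx : MIndep R 4 x) {A : Finset (Fin 5)} {c : Fin 5}
    (hA : A.card ≤ 3) (hc : c ∉ A) : x c ∉ Submodule.span R (x '' ↑A) := by
  classical
  have hcard : (insert c A).card ≤ 4 := by
    have := Finset.card_insert_le c A
    omega
  have li := mindep_sub hx (insert c A) hcard
  have hcmem : c ∈ insert c A := Finset.mem_insert_self c A
  have key := li.notMem_span_image (s := {i : (insert c A : Finset (Fin 5)) | (i : Fin 5) ∈ A})
    (x := ⟨c, hcmem⟩) (by simpa using hc)
  have himg : (fun i : (insert c A : Finset (Fin 5)) => x (i : Fin 5)) ''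
      {i : (insert c A : Finset (Fin 5)) | (i : Fin 5) ∈ A} = x '' ↑A := by
    ext w
    constructor
    · rintro ⟨⟨i, hi⟩, hiA, rfl⟩
      exact ⟨i, hiA, rfl⟩
    · rintro ⟨i, hiA, rfl⟩
      exact ⟨⟨i, Finset.mem_insert_of_mem hiA⟩, hiA, rfl⟩
  rw [himg] at key
  exact key

/-- Let `W` be `4`-dimensional, `x` a `4`-independent family of `5` vectors
of `W` and `y` a `4`-independent family of `5` functionals with kernels `U_i`, such that
every `U_i` is spanned by a subset of `X` and every line `⟨x i⟩` is the intersection of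
some of the `U_j`. Then `|J_2(X) ∩ J*_2(Y)| ≤ 5 < 7 = a(5,2)`. -/
theorem card_inter_le_five
    {K W : Type*} [DivisionRing K] [AddCommGroup W] [Module K W]
    [FiniteDimensional K W] (hW : Module.finrank K W = 4)
    (x : Fin 5 → W) (hxinj : Function.Injective x) (hx : MIndep K 4 x)
    (y : Fin 5 → (W →ₗ[K] K)) (hyinj : Function.Injective y)
    (hy : MIndep Kᵐᵒᵖ 4 y)
    (hker : ∀ i, ∃ A : Finset (Fin 5),
      LinearMap.ker (y i) = Submodule.span K (x '' ↑A))
    (hline : ∀ i, ∃ T : Finset (Fin 5),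
      Submodule.span K {x i} = ⨅ j ∈ T, LinearMap.ker (y j)) :
    (JkSet K 2 x ∩ JStarSet K 2 y).ncard ≤ 5 ∧ (5 : ℕ) < 7 ∧
      Nat.choose 3 0 + Nat.choose 4 2 = 7 := by
  classical
  refine ⟨?_, by norm_num, by decide⟩
  -- each functional is nonzero
  have hy0 : ∀ j, y j ≠ 0 := by
    intro j
    obtain ⟨B, hjB, hB4⟩ := Finset.exists_superset_card_eq
      (s := ({j} : Finset (Fin 5))) (n := 4) (by simp) (by simp)
    have := (hy B hB4).ne_zero ⟨j, hjB (Finset.mem_singleton_self j)⟩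
    simpa using this
  have hx0 : ∀ i, x i ≠ 0 := by
    intro i
    obtain ⟨B, hiB, hB4⟩ := Finset.exists_superset_card_eq
      (s := ({i} : Finset (Fin 5))) (n := 4) (by simp) (by simp)
    have := (hx B hB4).ne_zero ⟨i, hiB (Finset.mem_singleton_self i)⟩
    simpa using this
  -- kernels have dimension at least 3
  have hker3 : ∀ j, 3 ≤ finrank K (LinearMap.ker (y j)) := by
    intro j
    have h1 := LinearMap.finrank_range_add_finrank_ker (y j)
    have h2 : finrank K (LinearMap.range (y j)) ≤ 1 := by
      have := Submodule.finrank_le (LinearMap.range (y j))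
      simpa using this
    omega
  -- intersections of kernels have codimension at most the number of kernels
  have hinf : ∀ T : Finset (Fin 5), 4 ≤ finrank K (⨅ j ∈ T, LinearMap.ker (y j) : Submodule K W) + T.card := by
    intro T
    induction T using Finset.induction_on with
    | empty =>
      have he : (⨅ j ∈ (∅ : Finset (Fin 5)), LinearMap.ker (y j)) = (⊤ : Submodule K W) := by
        simp
      rw [he]
      simp [finrank_top, hW]
    | @insert a T ha ih =>
      rw [Finset.iInf_insert]
      have h1 := finrank_sup_add_finrank_inf_eq (LinearMap.ker (y a)) (⨅ j ∈ T, LinearMap.ker (y j) : Submodule K W)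
      have h2 : finrank K ((LinearMap.ker (y a)) ⊔ (⨅ j ∈ T, LinearMap.ker (y j) : Submodule K W) : Submodule K W) ≤ 4 := by
        have := Submodule.finrank_le ((LinearMap.ker (y a)) ⊔ (⨅ j ∈ T, LinearMap.ker (y j) : Submodule K W))
        omega
      have h3 := hker3 a
      rw [Finset.card_insert_of_notMem ha]
      omega
  -- the incidence sets
  set Dset : Fin 5 → Finset (Fin 5) := fun i => Finset.univ.filter (fun j => x i ∈ LinearMap.ker (y j))
    with hDdef
  set Aset : Fin 5 → Finset (Fin 5) := fun j => Finset.univ.filter (fun i => x i ∈ LinearMap.ker (y j))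
    with hAdef
  have hdeg3 : ∀ i, 3 ≤ (Dset i).card := by
    intro i
    obtain ⟨T, hT⟩ := hline i
    have hxmem : x i ∈ (⨅ j ∈ T, LinearMap.ker (y j) : Submodule K W) := by
      rw [← hT]; exact Submodule.mem_span_singleton_self _
    have hsub : T ⊆ Dset i := by
      intro j hj
      simp only [hDdef, Finset.mem_filter, Finset.mem_univ, true_and]
      simp only [Submodule.mem_iInf] at hxmem
      exact hxmem j hj
    have h1 := hinf T
    have h2 : finrank K (⨅ j ∈ T, LinearMap.ker (y j) : Submodule K W) = 1 := by
      rw [← hT]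
      exact finrank_span_singleton (hx0 i)
    have h3 : 3 ≤ T.card := by omega
    exact le_trans h3 (Finset.card_le_card hsub)
  have hA3 : ∀ j, (Aset j).card ≤ 3 := by
    intro j
    by_contra hcon
    push_neg at hcon
    obtain ⟨B, hBsub, hB4⟩ := Finset.exists_subset_card_eq (n := 4) hcon
    have li := hx B hB4
    have hspan : Submodule.span K (x '' ↑B) ≤ LinearMap.ker (y j) := by
      rw [Submodule.span_le]
      rintro w ⟨i, hiB, rfl⟩
      have := hBsub hiB
      simp only [hAdef, Finset.mem_filter] at this
      exact this.2
    have hrange : Set.range (fun i : B => x (i : Fin 5)) = x '' ↑B := by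
      ext w
      constructor
      · rintro ⟨⟨i, hi⟩, rfl⟩; exact ⟨i, hi, rfl⟩
      · rintro ⟨i, hi, rfl⟩; exact ⟨⟨i, hi⟩, rfl⟩
    have hfr : finrank K (Submodule.span K (x '' ↑B)) = 4 := by
      rw [← hrange]
      rw [finrank_span_eq_card li]
      simp [hB4]
    have hle : 4 ≤ finrank K (LinearMap.ker (y j)) := by
      rw [← hfr]
      exact Submodule.finrank_mono hspan
    have : finrank K (LinearMap.ker (y j)) ≤ 4 := by
      have := Submodule.finrank_le (LinearMap.ker (y j)); omega
    have htop : LinearMap.ker (y j) = ⊤ := eq_top_of_finrank_eq (by omega)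
    exact hy0 j (LinearMap.ker_eq_top.mp htop)
  -- double counting
  have key : ∑ i : Fin 5, (Dset i).card = ∑ j : Fin 5, (Aset j).card := by
    simp only [hDdef, hAdef, Finset.card_filter]
    exact Finset.sum_comm
  have hsum1 : 15 ≤ ∑ i : Fin 5, (Dset i).card := by
    have := Finset.card_nsmul_le_sum Finset.univ (fun i => (Dset i).card) 3
      (fun i _ => hdeg3 i)
    simpa using this
  have hsum2 : ∑ j : Fin 5, (Aset j).card ≤ 15 := by
    have := Finset.sum_le_card_nsmul Finset.univ (fun j => (Aset j).card) 3
      (fun j _ => hA3 j)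
    simpa using this
  have hsum : ∑ i : Fin 5, (Dset i).card = 15 := by omega
  have hsumA : ∑ j : Fin 5, (Aset j).card = 15 := by omega
  have hDeq : ∀ i, (Dset i).card = 3 := by
    intro i
    by_contra hne
    have hlt : 3 < (Dset i).card := lt_of_le_of_ne (hdeg3 i) (Ne.symm hne)
    have : (15 : ℕ) < ∑ i : Fin 5, (Dset i).card := by
      calc (15 : ℕ) = ∑ _i : Fin 5, 3 := by simp
        _ < ∑ i : Fin 5, (Dset i).card :=
          Finset.sum_lt_sum (fun i _ => hdeg3 i) ⟨i, Finset.mem_univ i, hlt⟩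
    omega
  have hAeq : ∀ j, (Aset j).card = 3 := by
    intro j
    by_contra hne
    have hlt : (Aset j).card < 3 := lt_of_le_of_ne (hA3 j) hne
    have : ∑ j : Fin 5, (Aset j).card < 15 := by
      calc ∑ j : Fin 5, (Aset j).card < ∑ _j : Fin 5, 3 :=
            Finset.sum_lt_sum (fun j _ => hA3 j) ⟨j, Finset.mem_univ j, hlt⟩
        _ = 15 := by simp
    omega
  -- complements
  set Nc : Fin 5 → Finset (Fin 5) := fun i => Finset.univ.filter (fun j => x i ∉ LinearMap.ker (y j))
    with hNdef
  set Bset : Fin 5 → Finset (Fin 5) := fun j => Finset.univ.filter (fun i => x i ∉ LinearMap.ker (y j))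
    with hBdef
  have hNc2 : ∀ i, (Nc i).card = 2 := by
    intro i
    have := Finset.card_filter_add_card_filter_not (s := Finset.univ)
      (p := fun j => x i ∈ LinearMap.ker (y j))
    have hD := hDeq i
    simp only [hDdef] at hD
    simp only [hNdef]
    simp only [Finset.card_univ, Fintype.card_fin] at this
    omega
  have hB2 : ∀ j, (Bset j).card = 2 := by
    intro j
    have := Finset.card_filter_add_card_filter_not (s := Finset.univ)
      (p := fun i => x i ∈ LinearMap.ker (y j))
    have hA := hAeq j
    simp only [hAdef] at hA
    simp only [hBdef]
    simp only [Finset.card_univ, Fintype.card_fin] at this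
    omega
  -- the covering map
  set g : Fin 5 → Submodule K W := fun v => ⨅ j ∈ Nc v, LinearMap.ker (y j) with hgdef
  have hsub : JkSet K 2 x ∩ JStarSet K 2 y ⊆ ↑(Finset.univ.image g) := by
    rintro P ⟨⟨A, hA2, hPA⟩, ⟨S, hS2, hPS⟩⟩
    obtain ⟨i, j, hij, hSij⟩ := Finset.card_eq_two.mp hS2
    have hmemP : ∀ w : W, w ∈ P ↔ (w ∈ LinearMap.ker (y i) ∧ w ∈ LinearMap.ker (y j)) := by
      intro w
      rw [hPS, hSij]
      simp [Submodule.mem_iInf]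
    have hAk : ∀ k, k ∈ A ↔ x k ∈ P := by
      intro k
      constructor
      · intro hk
        rw [hPA]
        exact Submodule.subset_span ⟨k, hk, rfl⟩
      · intro hk
        by_contra hkA
        have := mindep_not_mem_span hx (A := A) (c := k) (by omega) hkA
        rw [hPA] at hk
        exact this hk
    have hAint : A = Aset i ∩ Aset j := by
      ext k
      simp only [Finset.mem_inter, hAdef, Finset.mem_filter, Finset.mem_univ, true_and]
      rw [hAk k, hmemP]
    have hcard2 : (Aset i ∩ Aset j).card = 2 := by rw [← hAint]; exact hA2
    have hcompl : Bset i ∪ Bset j = (Aset i ∩ Aset j)ᶜ := by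
      ext k
      simp only [Finset.mem_union, Finset.mem_compl, Finset.mem_inter, hBdef, hAdef,
        Finset.mem_filter, Finset.mem_univ, true_and]
      tauto
    have hBU : (Bset i ∪ Bset j).card = 3 := by
      rw [hcompl, Finset.card_compl, hcard2]
      simp
    have hBI : (Bset i ∩ Bset j).card = 1 := by
      have := Finset.card_union_add_card_inter (Bset i) (Bset j)
      rw [hBU, hB2 i, hB2 j] at this
      omega
    obtain ⟨v, hv⟩ := Finset.card_eq_one.mp hBI
    have hvi : v ∈ Bset i ∩ Bset j := by rw [hv]; exact Finset.mem_singleton_self v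
    have hvmem := Finset.mem_inter.mp hvi
    have hiNc : i ∈ Nc v := by
      have := hvmem.1
      simp only [hBdef, Finset.mem_filter, Finset.mem_univ, true_and] at this
      simp only [hNdef, Finset.mem_filter, Finset.mem_univ, true_and]
      exact this
    have hjNc : j ∈ Nc v := by
      have := hvmem.2
      simp only [hBdef, Finset.mem_filter, Finset.mem_univ, true_and] at this
      simp only [hNdef, Finset.mem_filter, Finset.mem_univ, true_and]
      exact this
    have hSsub : S ⊆ Nc v := by
      rw [hSij]
      intro l hl
      rcases Finset.mem_insert.mp hl with rfl | hl
      · exact hiNc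
      · rw [Finset.mem_singleton.mp hl]; exact hjNc
    have hSeq : S = Nc v := Finset.eq_of_subset_of_card_le hSsub (by rw [hNc2 v, hS2])
    have : P = g v := by rw [hPS, hSeq]
    rw [this]
    exact Finset.mem_coe.mpr (Finset.mem_image_of_mem g (Finset.mem_univ v))
  calc (JkSet K 2 x ∩ JStarSet K 2 y).ncard
      ≤ (↑(Finset.univ.image g) : Set (Submodule K W)).ncard :=
        Set.ncard_le_ncard hsub (Finset.finite_toSet _)
    _ = (Finset.univ.image g).card := Set.ncard_coe_finset _
    _ ≤ 5 := le_trans Finset.card_image_le (by simp)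
end
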